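/- For any compact [α₋,α₊] ⊂ (0,1) there is a constant C such that for all α ∈ [α₋,α₊] and z ∈ (0,1]: 0 ≤ Σ_{r=1}^{∞} z_r'(z) ≤ C·z^{−α}, where z_r' = d/dz E_α^{−r}(z). -/

import Mathlib

/-- Left branch of the LSV (Pomeau–Manneville type) map. -/
noncomputable def Ea (α x : ℝ) : ℝ := x * (1 + 2 ^ α * x ^ α)

open Real Filter

/-- Odd extension of `Ea` to the whole real line. -/
noncomputable def Fm (α x : ℝ) : ℝ := x * (1 + 2 ^ α * |x| ^ α)

/-- Derivative of the map. -/
noncomputable def Dd (α x : ℝ) : ℝ := 1 + 2 ^ α * ((α + 1) * x ^ α)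


/-- odd extension of `Ea` -/

lemma Fm_eq (α : ℝ) {x : ℝ} (hx : 0 ≤ x) : Fm α x = Ea α x := by
  simp [Fm, Ea, abs_of_nonneg hx]

lemma Fm_strictMono (α : ℝ) (hα : 0 < α) : StrictMono (Fm α) := by
  have key : ∀ x y : ℝ, 0 ≤ x → x < y → Fm α x < Fm α y := by
    intro x y hx hxy
    have hy : 0 < y := lt_of_le_of_lt hx hxy
    have h1 : |x| ^ α ≤ |y| ^ α := by
      apply Real.rpow_le_rpow (abs_nonneg x) _ hα.le
      rw [abs_of_nonneg hx, abs_of_nonneg hy.le]; exact hxy.le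
    have h2 : (0:ℝ) < 1 + 2 ^ α * |x| ^ α := by positivity
    calc Fm α x = x * (1 + 2 ^ α * |x| ^ α) := rfl
      _ < y * (1 + 2 ^ α * |x| ^ α) := by exact mul_lt_mul_of_pos_right hxy h2
      _ ≤ y * (1 + 2 ^ α * |y| ^ α) := by
          apply mul_le_mul_of_nonneg_left _ hy.le
          have : (0:ℝ) < 2 ^ α := by positivity
          nlinarith
  have hodd : ∀ x : ℝ, Fm α (-x) = -(Fm α x) := by
    intro x; simp only [Fm, abs_neg]; ring
  intro x y hxy
  rcases le_or_gt 0 x with hx | hx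
  · exact key x y hx hxy
  · rcases lt_or_ge 0 y with hy | hy
    · have h1 : Fm α x < 0 := by
        have := key 0 (-x) le_rfl (by linarith)
        have h0 : Fm α 0 = 0 := by simp [Fm]
        rw [h0] at this
        have := hodd x
        nlinarith [this]
      have h2 : 0 < Fm α y := by
        have := key 0 y le_rfl hy
        simpa [Fm] using this
      linarith
    · have := key (-y) (-x) (by linarith) (by linarith)
      rw [hodd, hodd] at this; linarith

lemma Fm_continuous (α : ℝ) (hα : 0 < α) : Continuous (Fm α) := by
  have h : Continuous fun x : ℝ => |x| ^ α := by
    rw [continuous_iff_continuousAt]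
    intro x
    exact (Real.continuousAt_rpow_const _ _ (Or.inr hα.le)).comp continuous_abs.continuousAt
  unfold Fm
  continuity

lemma Fm_ge_self (α : ℝ) {x : ℝ} (hx : 0 ≤ x) : x ≤ Fm α x := by
  have : (0:ℝ) ≤ 2 ^ α * |x| ^ α := by positivity
  have : x * 1 ≤ x * (1 + 2 ^ α * |x| ^ α) := by
    apply mul_le_mul_of_nonneg_left _ hx; linarith
  simpa [Fm] using this

lemma Fm_surjective (α : ℝ) (hα : 0 < α) : Function.Surjective (Fm α) := by
  have hodd : ∀ x : ℝ, Fm α (-x) = -(Fm α x) := by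
    intro x; simp only [Fm, abs_neg]; ring
  apply Continuous.surjective (Fm_continuous α hα)
  · apply tendsto_atTop_mono' _ _ tendsto_id
    filter_upwards [eventually_ge_atTop (0:ℝ)] with x hx
    exact Fm_ge_self α hx
  · apply tendsto_atBot_mono' _ _ tendsto_id
    filter_upwards [eventually_le_atBot (0:ℝ)] with x hx
    have := Fm_ge_self α (x := -x) (by linarith)
    rw [hodd] at this; simp only [id]; linarith

lemma exists_inverse (α : ℝ) (hα : 0 < α) :
    ∃ g : ℝ → ℝ, Continuous g ∧ (∀ y, Fm α (g y) = y) ∧ (∀ x, g (Fm α x) = x) := by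
  set e := StrictMono.orderIsoOfSurjective (Fm α) (Fm_strictMono α hα) (Fm_surjective α hα) with he
  refine ⟨e.symm, ?_, ?_, ?_⟩
  · exact e.symm.continuous
  · intro y
    have := StrictMono.orderIsoOfSurjective_self_symm_apply (Fm α) (Fm_strictMono α hα) (Fm_surjective α hα) y
    exact this
  · intro x
    exact StrictMono.orderIsoOfSurjective_symm_apply_self (Fm α) (Fm_strictMono α hα) (Fm_surjective α hα) x
/-- derivative of the map -/

lemma Dd_ge_one (α : ℝ) (hα : 0 < α) {x : ℝ} (hx : 0 ≤ x) : 1 ≤ Dd α x := by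
  have h1 : (0:ℝ) ≤ 2 ^ α * ((α + 1) * x ^ α) := by positivity
  simp only [Dd]; linarith

lemma hasDerivAt_Fm (α : ℝ) (hα : 0 < α) {x : ℝ} (hx : 0 < x) :
    HasDerivAt (Fm α) (Dd α x) x := by
  have h1 : HasDerivAt (fun y : ℝ => y + 2 ^ α * y ^ (α + 1))
      (1 + 2 ^ α * ((α + 1) * x ^ (α + 1 - 1))) x := by
    exact (hasDerivAt_id x).add
      (((Real.hasDerivAt_rpow_const (Or.inl hx.ne')).const_mul (2 ^ α : ℝ)))
  have h2 : α + 1 - 1 = α := by ring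
  rw [h2] at h1
  apply h1.congr_of_eventuallyEq
  filter_upwards [Ioi_mem_nhds hx] with y hy
  have hy' : (0:ℝ) < y := hy
  rw [Fm, abs_of_nonneg hy'.le, Real.rpow_add_one hy'.ne' α]
  ring

lemma cube_root_lemma (A t : ℝ) (hA : 1 ≤ A) (ht : 0 ≤ t) (ht2 : t ≤ 2) :
    (A + t) ^ ((4:ℝ)/3) ≤ A ^ ((4:ℝ)/3) + 2 * t * A ^ ((1:ℝ)/3) := by
  have hA0 : (0:ℝ) < A := by linarith
  set x := A ^ ((1:ℝ)/3) with hx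
  have hx1 : 1 ≤ x := Real.one_le_rpow hA (by norm_num)
  have hx0 : (0:ℝ) < x := by linarith
  have hxc : x ^ (3:ℕ) = A := by
    rw [hx, ← Real.rpow_natCast (A ^ ((1:ℝ)/3)) 3, ← Real.rpow_mul hA0.le]
    norm_num
  have hA43 : A ^ ((4:ℝ)/3) = x ^ (4:ℕ) := by
    rw [hx, ← Real.rpow_natCast (A ^ ((1:ℝ)/3)) 4, ← Real.rpow_mul hA0.le]
    norm_num
  set d := t / (3 * x ^ (2:ℕ)) with hd
  have hd0 : 0 ≤ d := by positivity
  have h3x2d : 3 * x ^ (2:ℕ) * d = t := by rw [hd]; field_simp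
  have hcube : A + t ≤ (x + d) ^ (3:ℕ) := by
    nlinarith [mul_nonneg hx0.le (sq_nonneg d), pow_nonneg hd0 3, hxc, h3x2d]
  have hroot : (A + t) ^ ((1:ℝ)/3) ≤ x + d := by
    calc (A + t) ^ ((1:ℝ)/3) ≤ ((x + d) ^ (3:ℕ)) ^ ((1:ℝ)/3) :=
          Real.rpow_le_rpow (by linarith) hcube (by norm_num)
      _ = x + d := by
          rw [← Real.rpow_natCast (x + d) 3, ← Real.rpow_mul (by linarith)]
          norm_num
  have hsplit : (A + t) ^ ((4:ℝ)/3) = (A + t) * (A + t) ^ ((1:ℝ)/3) := by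
    rw [← Real.rpow_one_add' (by linarith) (by norm_num)]
    norm_num
  have hx3d : 3 * (x ^ (3:ℕ)) * d = t * x := by
    rw [hd]; field_simp
  have hdx : d ≤ (2/3) * x := by
    rw [hd, div_le_iff₀ (by positivity)]
    nlinarith [hxc]
  have htd : t * d ≤ t * ((2/3) * x) := mul_le_mul_of_nonneg_left hdx ht
  calc (A + t) ^ ((4:ℝ)/3) = (A + t) * (A + t) ^ ((1:ℝ)/3) := hsplit
    _ ≤ (A + t) * (x + d) := by
        apply mul_le_mul_of_nonneg_left hroot (by linarith)
    _ ≤ x ^ (4:ℕ) + 2 * t * x := by nlinarith [hx3d, htd, hxc]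
    _ = A ^ ((4:ℝ)/3) + 2 * t * A ^ ((1:ℝ)/3) := by rw [hA43, hx]

lemma sum_tele_lemma (A t : ℝ) (hA : 1 ≤ A) (ht : 0 < t) :
    (t/3) * (A + t) ^ (-((4:ℝ)/3)) ≤ A ^ (-((1:ℝ)/3)) - (A + t) ^ (-((1:ℝ)/3)) := by
  have hA0 : (0:ℝ) < A := by linarith
  have hB0 : (0:ℝ) < A + t := by linarith
  set x := A ^ ((1:ℝ)/3) with hx
  set y := (A + t) ^ ((1:ℝ)/3) with hy
  have hx1 : 1 ≤ x := Real.one_le_rpow hA (by norm_num)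
  have hy0 : (0:ℝ) < y := Real.rpow_pos_of_pos hB0 _
  have hxy : x ≤ y := Real.rpow_le_rpow hA0.le (by linarith) (by norm_num)
  have hxc : x ^ (3:ℕ) = A := by
    rw [hx, ← Real.rpow_natCast (A ^ ((1:ℝ)/3)) 3, ← Real.rpow_mul hA0.le]; norm_num
  have hyc : y ^ (3:ℕ) = A + t := by
    rw [hy, ← Real.rpow_natCast ((A+t) ^ ((1:ℝ)/3)) 3, ← Real.rpow_mul hB0.le]; norm_num
  have hAneg : A ^ (-((1:ℝ)/3)) = x⁻¹ := by
    rw [Real.rpow_neg hA0.le, hx]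
  have hBneg : (A + t) ^ (-((1:ℝ)/3)) = y⁻¹ := by
    rw [Real.rpow_neg hB0.le, hy]
  have hB43 : (A + t) ^ (-((4:ℝ)/3)) = (y ^ (4:ℕ))⁻¹ := by
    rw [Real.rpow_neg hB0.le, hy, ← Real.rpow_natCast ((A+t) ^ ((1:ℝ)/3)) 4,
      ← Real.rpow_mul hB0.le]
    norm_num
  rw [hAneg, hBneg, hB43]
  have hx0 : (0:ℝ) < x := by linarith
  have hsub : x⁻¹ - y⁻¹ = (y - x) / (x * y) := by field_simp
  have hyx : t ≤ 3 * (y - x) * y ^ (2:ℕ) := by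
    have key : (0:ℝ) ≤ (y - x)^(2:ℕ) * (2*y + x) := by positivity
    nlinarith [key, hxc, hyc]
  have hrw : (t/3) * (y^(4:ℕ))⁻¹ = t / (3 * y^(4:ℕ)) := by ring
  rw [hsub, hrw, div_le_div_iff₀ (by positivity) (by positivity)]
  have h5 : 0 ≤ y - x := by linarith
  have h6 : x * y^(3:ℕ) ≤ y^(4:ℕ) := by nlinarith [pow_pos hy0 3]
  nlinarith [mul_le_mul_of_nonneg_right hyx (mul_pos hx0 hy0).le,
    mul_le_mul_of_nonneg_left h6 (by linarith : (0:ℝ) ≤ 3*(y-x))]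

lemma pow43_le_five {x : ℝ} (h1 : 1 ≤ x) (h3 : x ≤ 3) : x ^ ((4:ℝ)/3) ≤ 5 := by
  have hx0 : (0:ℝ) < x := by linarith
  have hroot : x ^ ((1:ℝ)/3) ≤ 5/3 := by
    calc x ^ ((1:ℝ)/3) ≤ ((5/3 : ℝ) ^ (3:ℕ)) ^ ((1:ℝ)/3) :=
          Real.rpow_le_rpow hx0.le (by norm_num; linarith) (by norm_num)
      _ = 5/3 := by
          rw [← Real.rpow_natCast ((5:ℝ)/3) 3, ← Real.rpow_mul (by norm_num)]
          norm_num
  have hsplit : x ^ ((4:ℝ)/3) = x * x ^ ((1:ℝ)/3) := by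
    rw [← Real.rpow_one_add' hx0.le (by norm_num)]; norm_num
  rw [hsplit]
  nlinarith [Real.rpow_nonneg hx0.le ((1:ℝ)/3)]

lemma g_pos (α : ℝ) (hα : 0 < α) (g : ℝ → ℝ) (hFg : ∀ y, Fm α (g y) = y)
    {y : ℝ} (hy : 0 < y) : 0 < g y := by
  by_contra h
  push_neg at h
  have h2 : Fm α (g y) ≤ Fm α 0 := (Fm_strictMono α hα).monotone h
  have h3 : Fm α 0 = 0 := by simp [Fm]
  rw [hFg, h3] at h2; linarith

lemma iter_pos (α : ℝ) (hα : 0 < α) (g : ℝ → ℝ) (hFg : ∀ y, Fm α (g y) = y)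
    {z : ℝ} (hz : 0 < z) : ∀ j : ℕ, 0 < g^[j] z
  | 0 => by simpa using hz
  | (j+1) => by
      rw [Function.iterate_succ_apply']
      exact g_pos α hα g hFg (iter_pos α hα g hFg hz j)

lemma iterate_hasDerivAt (α : ℝ) (hα : 0 < α) (g : ℝ → ℝ) (hgc : Continuous g)
    (hFg : ∀ y, Fm α (g y) = y) {z : ℝ} (hz : 0 < z) :
    ∀ R : ℕ, HasDerivAt (g^[R]) (∏ j ∈ Finset.range R, (Dd α (g^[j+1] z))⁻¹) z := by
  have hgd : ∀ y : ℝ, 0 < y → HasDerivAt g (Dd α (g y))⁻¹ y := by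
    intro y hy
    have hgy := g_pos α hα g hFg hy
    have hD : Dd α (g y) ≠ 0 := by
      have := Dd_ge_one α hα hgy.le; intro h; rw [h] at this; linarith
    exact HasDerivAt.of_local_left_inverse hgc.continuousAt (hasDerivAt_Fm α hα hgy) hD
      (Filter.Eventually.of_forall hFg)
  intro R
  induction R with
  | zero => simpa using hasDerivAt_id z
  | succ R ih =>
    have h1 := (hgd _ (iter_pos α hα g hFg hz R)).comp z ih
    have h2 : g ∘ g^[R] = g^[R+1] := (Function.iterate_succ' g R).symm
    rw [h2] at h1
    refine h1.congr_deriv ?_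
    rw [Finset.prod_range_succ, Function.iterate_succ_apply']
    ring

lemma drift_lemma (α : ℝ) (hα : 0 < α) (hα1 : α < 1) (g : ℝ → ℝ)
    (hFg : ∀ y, Fm α (g y) = y) {z : ℝ} (hz : 0 < z) :
    ∀ j : ℕ, ((g^[j] z) ^ α)⁻¹ ≤ (z ^ α)⁻¹ + (α * 2 ^ α) * j := by
  intro j
  induction j with
  | zero => simp
  | succ j ih =>
    set s := g^[j] z with hsdef
    set t := g^[j+1] z with htdef
    have hs : 0 < s := iter_pos α hα g hFg hz j
    have ht : 0 < t := iter_pos α hα g hFg hz (j+1)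
    have hFmt : Fm α t = s := by
      rw [htdef, Function.iterate_succ_apply']
      exact hFg s
    have hst : s = t * (1 + 2 ^ α * t ^ α) := by
      rw [← hFmt, Fm, abs_of_nonneg ht.le]
    have h2nn : (0:ℝ) ≤ 2 ^ α * t ^ α := by positivity
    have htle : t ≤ s := by nlinarith
    have htsα : t ^ α ≤ s ^ α := Real.rpow_le_rpow ht.le htle hα.le
    have hsα : s ^ α = t ^ α * (1 + 2 ^ α * t ^ α) ^ α := by
      rw [hst, Real.mul_rpow ht.le (by positivity)]
    have hbern : (1 + 2 ^ α * t ^ α) ^ α ≤ 1 + α * (2 ^ α * t ^ α) :=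
      rpow_one_add_le_one_add_mul_self (by linarith) hα.le hα1.le
    have htα : 0 < t ^ α := Real.rpow_pos_of_pos ht α
    have hsα0 : 0 < s ^ α := Real.rpow_pos_of_pos hs α
    have key : s ^ α ≤ t ^ α + (α * 2 ^ α) * (t ^ α * s ^ α) := by
      have hb1 : s ^ α ≤ t ^ α * (1 + α * (2 ^ α * t ^ α)) := by
        rw [hsα]
        exact mul_le_mul_of_nonneg_left hbern htα.le
      have hb2 : α * 2 ^ α * (t ^ α * t ^ α) ≤ α * 2 ^ α * (t ^ α * s ^ α) := by
        apply mul_le_mul_of_nonneg_left _ (by positivity)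
        exact mul_le_mul_of_nonneg_left htsα htα.le
      nlinarith
    have step : (t ^ α)⁻¹ ≤ (s ^ α)⁻¹ + α * 2 ^ α := by
      have expand : (s ^ α)⁻¹ + α * 2 ^ α = (1 + (α * 2 ^ α) * s ^ α) / s ^ α := by
        field_simp
      rw [expand, inv_eq_one_div, div_le_div_iff₀ htα hsα0]
      nlinarith
    have hz' : 0 < (z:ℝ) ^ α := Real.rpow_pos_of_pos hz α
    push_cast
    push_cast at ih
    linarith

theorem stmt19 (αm αp : ℝ) (h1 : 0 < αm) (h2 : αm ≤ αp) (h3 : αp < 1) :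
    ∃ C : ℝ, 0 < C ∧
      ∀ α ∈ Set.Icc αm αp, ∀ Z : ℕ → ℝ → ℝ,
        (∀ x ∈ Set.Ioi (0:ℝ), Z 0 x = x) →
        (∀ r : ℕ, ∀ x ∈ Set.Ioi (0:ℝ), Ea α (Z (r + 1) x) = Z r x ∧ 0 < Z (r + 1) x) →
        (∀ r : ℕ, ∀ x ∈ Set.Ioc (0:ℝ) 1, Z (r + 1) x ≤ 1/2) →
        ∀ z ∈ Set.Ioc (0:ℝ) 1,
          Summable (fun r : ℕ => deriv (Z (r + 1)) z) ∧
          0 ≤ ∑' r : ℕ, deriv (Z (r + 1)) z ∧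
          ∑' r : ℕ, deriv (Z (r + 1)) z ≤ C * z ^ (-α) := by
  refine ⟨15 / αm, by positivity, ?_⟩
  rintro α ⟨hαm, hαp⟩ Z hZ0 hZrec _ z ⟨hz0, hz1⟩
  have hα : 0 < α := h1.trans_le hαm
  have hα1 : α < 1 := hαp.trans_lt h3
  obtain ⟨g, hgc, hFg, hgF⟩ := exists_inverse α hα
  -- Z agrees with iterates of g on positive reals
  have hZiter : ∀ r : ℕ, ∀ x : ℝ, 0 < x → Z r x = g^[r] x := by
    intro r
    induction r with
    | zero => intro x hx; simpa using hZ0 x hx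
    | succ r ih =>
      intro x hx
      obtain ⟨hEa, hpos⟩ := hZrec r x hx
      have ha : Fm α (Z (r+1) x) = Z r x := by rw [Fm_eq α hpos.le]; exact hEa
      have hb : Fm α (g^[r+1] x) = g^[r] x := by
        rw [Function.iterate_succ_apply']; exact hFg _
      apply (Fm_strictMono α hα).injective
      rw [ha, hb, ih x hx]
  -- derivative formula
  have hderiv : ∀ r : ℕ,
      deriv (Z (r+1)) z = ∏ j ∈ Finset.range (r+1), (Dd α (g^[j+1] z))⁻¹ := by
    intro r
    have heq : Z (r+1) =ᶠ[nhds z] g^[r+1] := by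
      filter_upwards [Ioi_mem_nhds hz0] with x hx
      exact hZiter (r+1) x hx
    exact ((iterate_hasDerivAt α hα g hgc hFg hz0 (r+1)).congr_of_eventuallyEq heq).deriv
  -- constants
  set c := α * 2 ^ α with hc
  set u := z ^ α with huu
  have h2α1 : (1:ℝ) ≤ 2 ^ α := Real.one_le_rpow one_le_two hα.le
  have h2α2 : (2:ℝ) ^ α ≤ 2 := by
    calc (2:ℝ) ^ α ≤ 2 ^ (1:ℝ) := Real.rpow_le_rpow_of_exponent_le one_le_two hα1.le
      _ = 2 := Real.rpow_one 2
  have hcpos : 0 < c := by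
    have : (0:ℝ) < 2 ^ α := by positivity
    exact mul_pos hα this
  have hcm : αm ≤ c := by nlinarith
  have hc2 : c ≤ 2 := by nlinarith
  have hu0 : 0 < u := Real.rpow_pos_of_pos hz0 α
  have hu1 : u ≤ 1 := Real.rpow_le_one hz0.le hz1 hα.le
  have hcu2 : c * u ≤ 2 := by nlinarith
  have hcu0 : 0 < c * u := by positivity
  -- lower bound on iterates
  have hwge : ∀ j : ℕ, u / (1 + c * j * u) ≤ (g^[j] z) ^ α := by
    intro j
    have hd := drift_lemma α hα hα1 g hFg hz0 j
    have hwα : 0 < (g^[j] z) ^ α := Real.rpow_pos_of_pos (iter_pos α hα g hFg hz0 j) α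
    have hden : 0 < u⁻¹ + c * (j:ℝ) := by positivity
    have hle : (u⁻¹ + c * (j:ℝ))⁻¹ ≤ (g^[j] z) ^ α := (inv_le_comm₀ hwα hden).mp hd
    have hne : (1 + c * (j:ℝ) * u) ≠ 0 := by positivity
    have hrw : u / (1 + c * (j:ℝ) * u) = (u⁻¹ + c * (j:ℝ))⁻¹ := by
      apply eq_inv_of_mul_eq_one_left
      field_simp
    rw [hrw]; exact hle
  -- factor bound
  have hfb : ∀ j : ℕ, (Dd α (g^[j+1] z))⁻¹ * (1 + c * ((j:ℝ)+2) * u) ^ ((4:ℝ)/3)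
      ≤ (1 + c * ((j:ℝ)+1) * u) ^ ((4:ℝ)/3) := by
    intro j
    have hAnn : 0 ≤ c * ((j:ℝ)+1) * u := by positivity
    set A := 1 + c * ((j:ℝ)+1) * u with hA
    have hA1 : 1 ≤ A := by linarith
    have hA0 : (0:ℝ) < A := by linarith
    have hBA : 1 + c * ((j:ℝ)+2) * u = A + c * u := by rw [hA]; ring
    have hcr := cube_root_lemma A (c*u) hA1 hcu0.le hcu2
    have hw1 : 0 < g^[j+1] z := iter_pos α hα g hFg hz0 (j+1)
    have hge : u / A ≤ (g^[j+1] z) ^ α := by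
      have := hwge (j+1)
      rw [hA]; push_cast at this ⊢; exact this
    have hDd : 1 + 2 * (c * u / A) ≤ Dd α (g^[j+1] z) := by
      have huA : (0:ℝ) ≤ u / A := by positivity
      have hα2 : 2 * α ≤ α + 1 := by linarith
      have hh1 : 2 * α * (u / A) ≤ (α+1) * ((g^[j+1] z) ^ α) := by
        calc 2 * α * (u / A) ≤ (α+1) * (u / A) := by nlinarith
          _ ≤ (α+1) * ((g^[j+1] z) ^ α) := by
              apply mul_le_mul_of_nonneg_left hge (by linarith)
      have hh2 : 2 ^ α * (2 * α * (u / A)) ≤ 2 ^ α * ((α+1) * (g^[j+1] z) ^ α) :=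
        mul_le_mul_of_nonneg_left hh1 (by positivity)
      have hh3 : 2 ^ α * (2 * α * (u / A)) = 2 * (c * u / A) := by rw [hc]; ring
      simp only [Dd]
      linarith
    have hA43A : A ^ ((4:ℝ)/3) = A * A ^ ((1:ℝ)/3) := by
      rw [← Real.rpow_one_add' hA0.le (by norm_num)]; norm_num
    have hApow : (0:ℝ) < A ^ ((4:ℝ)/3) := Real.rpow_pos_of_pos hA0 _
    have hmain : (A + c*u) ^ ((4:ℝ)/3) ≤ A ^ ((4:ℝ)/3) * Dd α (g^[j+1] z) := by
      have hh3 : A ^ ((4:ℝ)/3) * (1 + 2 * (c * u / A)) = A ^ ((4:ℝ)/3) + 2*(c*u) * A ^ ((1:ℝ)/3) := by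
        rw [hA43A]; field_simp
      have hh4 : A ^ ((4:ℝ)/3) * (1 + 2 * (c * u / A)) ≤ A ^ ((4:ℝ)/3) * Dd α (g^[j+1] z) :=
        mul_le_mul_of_nonneg_left hDd hApow.le
      linarith
    have hDpos : (0:ℝ) < Dd α (g^[j+1] z) := lt_of_lt_of_le one_pos (Dd_ge_one α hα hw1.le)
    rw [hBA, inv_mul_le_iff₀ hDpos]
    calc (A + c*u) ^ ((4:ℝ)/3) ≤ A ^ ((4:ℝ)/3) * Dd α (g^[j+1] z) := hmain
      _ = Dd α (g^[j+1] z) * A ^ ((4:ℝ)/3) := by ring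
  -- product bound by induction
  have hprod : ∀ R : ℕ, (∏ j ∈ Finset.range R, (Dd α (g^[j+1] z))⁻¹)
      * (1 + c * ((R:ℝ)+1) * u) ^ ((4:ℝ)/3) ≤ (1 + c * u) ^ ((4:ℝ)/3) := by
    intro R
    induction R with
    | zero => simp
    | succ R ih =>
      have hPnn : (0:ℝ) ≤ ∏ j ∈ Finset.range R, (Dd α (g^[j+1] z))⁻¹ := by
        apply Finset.prod_nonneg
        intro j _
        have := Dd_ge_one α hα (iter_pos α hα g hFg hz0 (j+1)).le
        positivity
      rw [Finset.prod_range_succ,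
        show (((R+1:ℕ)):ℝ) + 1 = (R:ℝ) + 2 by push_cast; ring]
      calc (∏ j ∈ Finset.range R, (Dd α (g^[j+1] z))⁻¹) * (Dd α (g^[R+1] z))⁻¹
            * (1 + c * ((R:ℝ)+2) * u) ^ ((4:ℝ)/3)
          = (∏ j ∈ Finset.range R, (Dd α (g^[j+1] z))⁻¹)
            * ((Dd α (g^[R+1] z))⁻¹ * (1 + c * ((R:ℝ)+2) * u) ^ ((4:ℝ)/3)) := by ring
        _ ≤ (∏ j ∈ Finset.range R, (Dd α (g^[j+1] z))⁻¹)
            * (1 + c * ((R:ℝ)+1) * u) ^ ((4:ℝ)/3) :=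
            mul_le_mul_of_nonneg_left (hfb R) hPnn
        _ ≤ (1 + c * u) ^ ((4:ℝ)/3) := ih
  -- per-term bound
  have hDprodnn : ∀ R : ℕ, (0:ℝ) ≤ ∏ j ∈ Finset.range R, (Dd α (g^[j+1] z))⁻¹ := by
    intro R
    apply Finset.prod_nonneg
    intro j _
    have := Dd_ge_one α hα (iter_pos α hα g hFg hz0 (j+1)).le
    positivity
  have hterm : ∀ r : ℕ, deriv (Z (r+1)) z
      ≤ 5 * ((1 + c * ((r:ℝ)+2) * u) ^ ((4:ℝ)/3))⁻¹ := by
    intro r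
    rw [hderiv r]
    have hp := hprod (r+1)
    rw [show (((r+1:ℕ)):ℝ) + 1 = (r:ℝ) + 2 by push_cast; ring] at hp
    have hBnn : (0:ℝ) ≤ c * ((r:ℝ)+2) * u := by positivity
    have hB1 : (1:ℝ) ≤ 1 + c * ((r:ℝ)+2) * u := by linarith
    have hX0 : (0:ℝ) < (1 + c * ((r:ℝ)+2) * u) ^ ((4:ℝ)/3) :=
      Real.rpow_pos_of_pos (by linarith) _
    have h5 : (1 + c * u) ^ ((4:ℝ)/3) ≤ 5 := pow43_le_five (by linarith) (by linarith)
    rw [show (5:ℝ) * ((1 + c * ((r:ℝ)+2) * u) ^ ((4:ℝ)/3))⁻¹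
        = 5 / ((1 + c * ((r:ℝ)+2) * u) ^ ((4:ℝ)/3)) by ring, le_div_iff₀ hX0]
    calc (∏ j ∈ Finset.range (r+1), (Dd α (g^[j+1] z))⁻¹) * (1 + c * ((r:ℝ)+2) * u) ^ ((4:ℝ)/3)
        ≤ (1 + c * u) ^ ((4:ℝ)/3) := hp
      _ ≤ 5 := h5
  -- telescoping sum bound
  have hsum : ∀ N : ℕ, ∑ r ∈ Finset.range N, deriv (Z (r+1)) z ≤ 15 / αm * z ^ (-α) := by
    intro N
    set b : ℕ → ℝ := fun n => (1 + c * ((n:ℝ)+1) * u) ^ (-((1:ℝ)/3)) with hbdef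
    have hstep : ∀ r : ℕ, deriv (Z (r+1)) z ≤ (15/(c*u)) * (b r - b (r+1)) := by
      intro r
      have hAnn : (0:ℝ) ≤ c * ((r:ℝ)+1) * u := by positivity
      have hst := sum_tele_lemma (1 + c * ((r:ℝ)+1) * u) (c*u) (by linarith) hcu0
      rw [show 1 + c * ((r:ℝ)+1) * u + c * u = 1 + c * ((r:ℝ)+2) * u by ring] at hst
      have hBpos : (0:ℝ) < 1 + c * ((r:ℝ)+2) * u := by positivity
      have hneg : (1 + c * ((r:ℝ)+2) * u) ^ (-((4:ℝ)/3))
          = ((1 + c * ((r:ℝ)+2) * u) ^ ((4:ℝ)/3))⁻¹ := by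
        rw [Real.rpow_neg hBpos.le]
      have hb1 : b (r+1) = (1 + c * ((r:ℝ)+2) * u) ^ (-((1:ℝ)/3)) := by
        have hcast : ((r+1:ℕ):ℝ) + 1 = (r:ℝ) + 2 := by push_cast; ring
        simp only [hbdef, hcast]
      calc deriv (Z (r+1)) z ≤ 5 * ((1 + c * ((r:ℝ)+2) * u) ^ ((4:ℝ)/3))⁻¹ := hterm r
        _ = (15/(c*u)) * ((c*u/3) * (1 + c * ((r:ℝ)+2) * u) ^ (-((4:ℝ)/3))) := by
            rw [hneg]; field_simp; ring
        _ ≤ (15/(c*u)) * ((1 + c * ((r:ℝ)+1) * u) ^ (-((1:ℝ)/3))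
              - (1 + c * ((r:ℝ)+2) * u) ^ (-((1:ℝ)/3))) := by
            apply mul_le_mul_of_nonneg_left hst (by positivity)
        _ = (15/(c*u)) * (b r - b (r+1)) := by rw [hb1, hbdef]
    have htele : ∑ r ∈ Finset.range N, (b r - b (r+1)) = b 0 - b N :=
      Finset.sum_range_sub' b N
    have hb0 : b 0 ≤ 1 := by
      have h00 : (0:ℝ) ≤ c * (((0:ℕ):ℝ) + 1) * u := by positivity
      simp only [hbdef]
      exact Real.rpow_le_one_of_one_le_of_nonpos (by linarith) (by norm_num)
    have hbN : 0 ≤ b N := by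
      have h00 : (0:ℝ) ≤ c * ((N:ℝ) + 1) * u := by positivity
      simp only [hbdef]
      exact Real.rpow_nonneg (by linarith) _
    have hzneg : z ^ (-α) = u⁻¹ := by rw [Real.rpow_neg hz0.le, ← huu]
    calc ∑ r ∈ Finset.range N, deriv (Z (r+1)) z
        ≤ ∑ r ∈ Finset.range N, (15/(c*u)) * (b r - b (r+1)) :=
          Finset.sum_le_sum fun r _ => hstep r
      _ = (15/(c*u)) * (b 0 - b N) := by rw [← Finset.mul_sum, htele]
      _ ≤ (15/(c*u)) * 1 := by
          apply mul_le_mul_of_nonneg_left (by linarith) (by positivity)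
      _ ≤ 15 / αm * z ^ (-α) := by
          rw [hzneg, mul_one]
          rw [show (15:ℝ) / αm * u⁻¹ = 15 / (αm * u) by field_simp]
          apply div_le_div_of_nonneg_left (by norm_num) (by positivity)
          exact mul_le_mul_of_nonneg_right hcm hu0.le
  have hnonneg : ∀ r : ℕ, 0 ≤ deriv (Z (r+1)) z := by
    intro r
    rw [hderiv r]
    exact hDprodnn (r+1)
  exact ⟨summable_of_sum_range_le hnonneg hsum, tsum_nonneg hnonneg,
    tsum_le_of_sum_range_le hnonneg hsum⟩
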